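/- For the function k₂ = ½X₁² + X₂² + (7/6)X₃² + (4/3)X₄² − 1 on S³, in stereographic coordinates centered at E₂ one has a₀(E₂) = 0 and a₁(E₂) = 0; i.e. the principal value ∫_{ℝ³}(k_{E₂}(x) − k_{E₂}(0))|x|^{-6} dx = 0 and Δ²k_{E₂}(0) + ∇(Δk_{E₂})(0)·(D²k_{E₂}(0))^{-1}∇(Δk_{E₂})(0) = 0. -/

import Mathlib

open MeasureTheory Filter Matrix

noncomputable section

/-- `k₂ = ½X₁² + X₂² + (7/6)X₃² + (4/3)X₄² − 1` on ℝ⁴ (restricted to `S³`). -/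
def k2 : EuclideanSpace ℝ (Fin 4) → ℝ :=
  fun X => (1 / 2) * (X 0) ^ 2 + (X 1) ^ 2 + (7 / 6) * (X 2) ^ 2 + (4 / 3) * (X 3) ^ 2 - 1

/-- Stereographic coordinates `σ_{E₂} : ℝ³ → S³ ⊂ ℝ⁴` centered at `E₂` (`σ_{E₂}(0) = E₂`):
the `E₂`-component is `(1−|x|²)/(1+|x|²)` while the orthogonal components are
`2xᵢ/(1+|x|²)`. -/
def stereoE2 : EuclideanSpace ℝ (Fin 3) → EuclideanSpace ℝ (Fin 4) :=
  fun x =>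
    (WithLp.equiv 2 (Fin 4 → ℝ)).symm
      ![2 * x 0 / (1 + ‖x‖ ^ 2), (1 - ‖x‖ ^ 2) / (1 + ‖x‖ ^ 2),
        2 * x 1 / (1 + ‖x‖ ^ 2), 2 * x 2 / (1 + ‖x‖ ^ 2)]

/-- `k_{E₂} = k₂ ∘ σ_{E₂} : ℝ³ → ℝ`. -/
def kE2 : EuclideanSpace ℝ (Fin 3) → ℝ := k2 ∘ stereoE2

/-- The Euclidean Laplacian on ℝ³ (sum of second partial derivatives). -/
def lapE3 (f : EuclideanSpace ℝ (Fin 3) → ℝ) (x : EuclideanSpace ℝ (Fin 3)) : ℝ :=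
  ∑ i : Fin 3,
    iteratedFDeriv ℝ 2 f x
      ![EuclideanSpace.single i (1 : ℝ), EuclideanSpace.single i (1 : ℝ)]

namespace Stmt18Aux

open ContDiff

abbrev E3 := EuclideanSpace ℝ (Fin 3)

lemma norm_sq_eq (x : E3) : ‖x‖ ^ 2 = (x 0)^2 + (x 1)^2 + (x 2)^2 := by
  rw [EuclideanSpace.norm_eq, Real.sq_sqrt (by positivity)]
  simp [Fin.sum_univ_three, sq_abs]

/-- The denominator `(1+‖x‖²)⁻²`. -/
def gden (x : E3) : ℝ := ((1 + ‖x‖^2)^2)⁻¹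

lemma kE2_eq (x : E3) :
    kE2 x = (-2) * ((x 0)^2 * gden x)
      + ((2/3) * ((x 1)^2 * gden x) + (4/3) * ((x 2)^2 * gden x)) := by
  have h : (0:ℝ) < 1 + ‖x‖^2 := by positivity
  simp only [kE2, k2, stereoE2, Function.comp, WithLp.equiv_symm_apply, PiLp.toLp_apply, gden]
  norm_num [Matrix.cons_val_zero, Matrix.cons_val_one, Matrix.head_cons, Matrix.cons_val_two, Matrix.cons_val_three,
    Matrix.tail_cons]
  rw [norm_sq_eq] at h ⊢
  field_simp
  ring

lemma kE2_zero : kE2 0 = 0 := by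
  have h : ∀ i, (0:E3) i = 0 := fun _ => rfl
  rw [kE2_eq, h 0, h 1, h 2]
  ring

lemma two_le_inf : (2 : WithTop ℕ∞) ≤ ∞ := by norm_cast

/-- Coordinate permutations as linear isometries of `ℝ³`. -/
def cperm (π : Equiv.Perm (Fin 3)) : E3 ≃ₗᵢ[ℝ] E3 :=
  LinearIsometryEquiv.piLpCongrLeft 2 ℝ ℝ π

lemma cperm_apply (π : Equiv.Perm (Fin 3)) (x : E3) (i : Fin 3) :
    cperm π x i = x (π.symm i) := rfl

lemma cperm_single (π : Equiv.Perm (Fin 3)) (i : Fin 3) :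
    cperm π (EuclideanSpace.single i (1:ℝ)) = EuclideanSpace.single (π i) (1:ℝ) := by
  exact
    LinearIsometryEquiv.piLpCongrLeft_single (p := 2) (𝕜 := ℝ) (E := ℝ) π i (1:ℝ)

lemma iteratedFDeriv_comp_CLE (g : E3 ≃L[ℝ] E3) (f : E3 → ℝ) (x : E3) (i : ℕ) (m : Fin i → E3) :
    iteratedFDeriv ℝ i (f ∘ g) x m = iteratedFDeriv ℝ i f (g x) (fun j => g (m j)) := by
  have h := g.iteratedFDerivWithin_comp_right f uniqueDiffOn_univ (x := x) (Set.mem_univ _) i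
  rw [Set.preimage_univ, iteratedFDerivWithin_univ, iteratedFDerivWithin_univ] at h
  rw [h]; rfl

lemma iteratedFDeriv_comp_LIE (g : E3 ≃ₗᵢ[ℝ] E3) (f : E3 → ℝ) (x : E3) (i : ℕ) (m : Fin i → E3) :
    iteratedFDeriv ℝ i (f ∘ g) x m = iteratedFDeriv ℝ i f (g x) (fun j => g (m j)) := by
  have h := iteratedFDeriv_comp_CLE g.toContinuousLinearEquiv f x i m
  simpa [LinearIsometryEquiv.coe_toContinuousLinearEquiv] using h

lemma lapE3_comp_perm (π : Equiv.Perm (Fin 3)) (f : E3 → ℝ) :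
    lapE3 (f ∘ (cperm π)) = (lapE3 f) ∘ (cperm π) := by
  funext x
  simp only [lapE3, Function.comp]
  have key : ∀ i : Fin 3,
      iteratedFDeriv ℝ 2 (f ∘ (cperm π)) x
        ![EuclideanSpace.single i (1:ℝ), EuclideanSpace.single i (1:ℝ)]
      = iteratedFDeriv ℝ 2 f (cperm π x)
        ![EuclideanSpace.single (π i) (1:ℝ), EuclideanSpace.single (π i) (1:ℝ)] := by
    intro i
    rw [iteratedFDeriv_comp_LIE (cperm π) f x 2]
    congr 1
    funext j
    fin_cases j <;> simp [cperm_single]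
  rw [Finset.sum_congr rfl (fun i _ => key i)]
  exact Equiv.sum_comp π (fun j => iteratedFDeriv ℝ 2 f (cperm π x)
    ![EuclideanSpace.single j (1:ℝ), EuclideanSpace.single j (1:ℝ)])

lemma contDiff_F (i : Fin 3) : ContDiff ℝ ∞ (fun x : E3 => (x i)^2 * gden x) := by
  have h1 : ContDiff ℝ ∞ (fun x : E3 => x i) := (EuclideanSpace.proj (𝕜 := ℝ) i).contDiff
  have h2 : ContDiff ℝ ∞ (fun x : E3 => (1 + ‖x‖^2)^2) :=
    (contDiff_const.add (contDiff_norm_sq ℝ)).pow 2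
  exact (h1.pow 2).mul (h2.inv (fun x => by positivity))

lemma contDiff_lapE3 {f : E3 → ℝ} (hf : ContDiff ℝ ∞ f) : ContDiff ℝ ∞ (lapE3 f) := by
  have : lapE3 f = fun x => ∑ i : Fin 3,
      (ContinuousMultilinearMap.apply ℝ (fun _ : Fin 2 => E3) ℝ
        ![EuclideanSpace.single i (1:ℝ), EuclideanSpace.single i (1:ℝ)])
        (iteratedFDeriv ℝ 2 f x) := rfl
  rw [this]
  refine ContDiff.sum fun i _ => ?_
  exact (ContinuousMultilinearMap.apply ℝ (fun _ : Fin 2 => E3) ℝ _).contDiff.comp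
    (hf.iteratedFDeriv_right (by norm_cast))

lemma lapE3_combo (a b c : ℝ) (f g h : E3 → ℝ) (hf : ContDiff ℝ ∞ f) (hg : ContDiff ℝ ∞ g)
    (hh : ContDiff ℝ ∞ h) (x : E3) :
    lapE3 (fun y => a * f y + (b * g y + c * h y)) x
      = a * lapE3 f x + (b * lapE3 g x + c * lapE3 h x) := by
  have hf2 : ContDiff ℝ 2 f := hf.of_le two_le_inf
  have hg2 : ContDiff ℝ 2 g := hg.of_le two_le_inf
  have hh2 : ContDiff ℝ 2 h := hh.of_le two_le_inf
  have e1 : (fun y => a * f y + (b * g y + c * h y)) = a • f + (b • g + c • h) := by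
    funext y; simp [Pi.smul_apply, smul_eq_mul]
  rw [e1]
  simp only [lapE3]
  rw [show ∀ x : E3, iteratedFDeriv ℝ 2 (a • f + (b • g + c • h)) x
    = a • iteratedFDeriv ℝ 2 f x + (b • iteratedFDeriv ℝ 2 g x + c • iteratedFDeriv ℝ 2 h x)
    from fun x => by
      rw [iteratedFDeriv_add_apply (f := a • f) (g := b • g + c • h)
          (by exact (hf2.const_smul a).contDiffAt) (by exact ((hg2.const_smul b).add (hh2.const_smul c)).contDiffAt),
        iteratedFDeriv_add_apply (f := b • g) (g := c • h)
          (by exact (hg2.const_smul b).contDiffAt) (by exact (hh2.const_smul c).contDiffAt),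
        iteratedFDeriv_const_smul_apply hf2.contDiffAt, iteratedFDeriv_const_smul_apply hg2.contDiffAt,
        iteratedFDeriv_const_smul_apply hh2.contDiffAt]]
  simp only [ContinuousMultilinearMap.add_apply, ContinuousMultilinearMap.smul_apply,
    smul_eq_mul, Finset.sum_add_distrib, Finset.mul_sum]

lemma kE2_neg (x : E3) : kE2 (-x) = kE2 x := by
  have h : ∀ i, (-x) i = -(x i) := fun i => rfl
  rw [kE2_eq, kE2_eq, h 0, h 1, h 2]
  have hg : gden (-x) = gden x := by simp [gden]
  rw [hg]; ring

lemma lapE3_kE2_even (x : E3) : lapE3 kE2 (-x) = lapE3 kE2 x := by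
  set g : E3 ≃L[ℝ] E3 := (LinearIsometryEquiv.neg ℝ (E := E3)).toContinuousLinearEquiv with hgdef
  have hg : ∀ y : E3, g y = -y := fun y => rfl
  have hcomp : kE2 ∘ ⇑g = kE2 := funext fun y => by rw [Function.comp_apply, hg, kE2_neg]
  simp only [lapE3]
  refine Finset.sum_congr rfl fun i _ => ?_
  conv_rhs => rw [← hcomp]
  rw [iteratedFDeriv_comp_CLE g kE2 x 2]
  have hm : (fun j => g (![EuclideanSpace.single i (1:ℝ), EuclideanSpace.single i (1:ℝ)] j))
      = fun j => (-1 : ℝ) • (![EuclideanSpace.single i (1:ℝ),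
          EuclideanSpace.single i (1:ℝ)] j) := by
    funext j; rw [hg, neg_one_smul]
  rw [hm, ContinuousMultilinearMap.map_smul_univ]
  simp [hg]

lemma fderiv_lap_zero (v : E3) : fderiv ℝ (lapE3 kE2) 0 v = 0 := by
  by_cases hd : DifferentiableAt ℝ (lapE3 kE2) 0
  · have hneg : HasFDerivAt (fun y : E3 => -y) (-(ContinuousLinearMap.id ℝ E3)) 0 := by
      exact (hasFDerivAt_id (0:E3)).neg
    have hL' : HasFDerivAt (lapE3 kE2) (fderiv ℝ (lapE3 kE2) 0) (-(0:E3)) := by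
      rw [neg_zero]; exact hd.hasFDerivAt
    have hcomp := hL'.comp (0:E3) hneg
    have heq : (lapE3 kE2) ∘ (fun y : E3 => -y) = lapE3 kE2 :=
      funext fun y => lapE3_kE2_even y
    rw [heq] at hcomp
    have h2 := hcomp.fderiv
    have h3 : fderiv ℝ (lapE3 kE2) 0 v = -(fderiv ℝ (lapE3 kE2) 0 v) := by
      conv_lhs => rw [h2]
      simp
    linarith
  · rw [fderiv_zero_of_not_differentiableAt hd]; simp

lemma bilap_zero : lapE3 (lapE3 kE2) 0 = 0 := by
  set F : Fin 3 → E3 → ℝ := fun i x => (x i)^2 * gden x with hF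
  have hFc : ∀ i, ContDiff ℝ ∞ (F i) := contDiff_F
  have hdec : kE2 = fun x => (-2) * F 0 x + ((2/3) * F 1 x + (4/3) * F 2 x) :=
    funext fun x => kE2_eq x
  have hlap1 : lapE3 kE2 = fun x =>
      (-2) * lapE3 (F 0) x + ((2/3) * lapE3 (F 1) x + (4/3) * lapE3 (F 2) x) := by
    funext x
    rw [hdec]
    exact lapE3_combo (-2) (2/3) (4/3) (F 0) (F 1) (F 2) (hFc 0) (hFc 1) (hFc 2) x
  have h2 : lapE3 (lapE3 kE2) 0 = (-2) * lapE3 (lapE3 (F 0)) 0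
      + ((2/3) * lapE3 (lapE3 (F 1)) 0 + (4/3) * lapE3 (lapE3 (F 2)) 0) := by
    rw [hlap1]
    exact lapE3_combo (-2) (2/3) (4/3) (lapE3 (F 0)) (lapE3 (F 1)) (lapE3 (F 2))
      (contDiff_lapE3 (hFc 0)) (contDiff_lapE3 (hFc 1)) (contDiff_lapE3 (hFc 2)) 0
  have hsym : ∀ i : Fin 3, lapE3 (lapE3 (F i)) 0 = lapE3 (lapE3 (F 0)) 0 := by
    intro i
    have hπ : F i = (F 0) ∘ (cperm (Equiv.swap 0 i)) := by
      funext x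
      have h0 : (cperm (Equiv.swap 0 i) x) 0 = x i := by
        rw [cperm_apply, Equiv.symm_swap, Equiv.swap_apply_left]
      have hgd : gden (cperm (Equiv.swap 0 i) x) = gden x := by
        simp [gden]
      simp only [hF, Function.comp_apply, h0, hgd]
    rw [hπ, lapE3_comp_perm, lapE3_comp_perm]
    simp only [Function.comp_apply, map_zero]
  rw [h2, hsym 1, hsym 2]; ring

set_option maxHeartbeats 1000000 in
lemma integral_zero_aux (r : ℝ) :
    (∫ x in {x : E3 | r ≤ ‖x‖}, (kE2 x - kE2 0) * ‖x‖ ^ (-6 : ℝ)) = 0 := by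
  set ρ : Equiv.Perm (Fin 3) := finRotate 3 with hρ
  set c : E3 ≃ₗᵢ[ℝ] E3 := cperm ρ with hc
  have hker : ∀ x : E3, kE2 x + (kE2 (c x) + kE2 (c (c x))) = 0 := by
    intro x
    have hg1 : gden (c x) = gden x := by simp [gden, hc]
    have hg2 : gden (c (c x)) = gden x := by simp [gden, hc]
    have e0 : (c x) 0 = x 2 := by
      rw [hc, cperm_apply]; exact congrArg (fun i => x i) (by decide)
    have e1 : (c x) 1 = x 0 := by
      rw [hc, cperm_apply]; exact congrArg (fun i => x i) (by decide)
    have e2 : (c x) 2 = x 1 := by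
      rw [hc, cperm_apply]; exact congrArg (fun i => x i) (by decide)
    have f0 : (c (c x)) 0 = x 1 := by
      rw [hc, cperm_apply]
      have : ρ.symm 0 = 2 := by decide
      rw [this, ← hc, e2]
    have f1 : (c (c x)) 1 = x 2 := by
      rw [hc, cperm_apply]
      have : ρ.symm 1 = 0 := by decide
      rw [this, ← hc, e0]
    have f2 : (c (c x)) 2 = x 0 := by
      rw [hc, cperm_apply]
      have : ρ.symm 2 = 1 := by decide
      rw [this, ← hc, e1]
    rw [kE2_eq x, kE2_eq (c x), kE2_eq (c (c x)), hg1, hg2, e0, e1, e2, f0, f1, f2]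
    ring
  set f : E3 → ℝ := fun x => (kE2 x - kE2 0) * ‖x‖ ^ (-6:ℝ) with hf
  set S : Set E3 := {x | r ≤ ‖x‖} with hS
  have hpre : ⇑c ⁻¹' S = S := by
    ext y
    simp [hS, Set.mem_preimage, Set.mem_setOf_eq]
  have hmp : MeasurePreserving (⇑c) volume volume := c.measurePreserving
  have hemb : MeasurableEmbedding (⇑c) := c.toHomeomorph.measurableEmbedding
  have h1 : ∀ g : E3 → ℝ, (∫ x in S, g (c x)) = ∫ x in S, g x := by
    intro g
    have := hmp.setIntegral_preimage_emb hemb g S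
    rwa [hpre] at this
  have hshift : ∀ g : E3 → ℝ, IntegrableOn g S volume →
      IntegrableOn (fun x => g (c x)) S volume := by
    intro g hg
    have := (hmp.integrableOn_comp_preimage hemb (f := g) (s := S)).2 hg
    rwa [hpre] at this
  by_cases hI : IntegrableOn f S volume
  · set f1 : E3 → ℝ := fun x => f (c x) with hf1
    set f2 : E3 → ℝ := fun x => f1 (c x) with hf2
    have hI1 : IntegrableOn f1 S volume := hshift f hI
    have hI2 : IntegrableOn f2 S volume := hshift f1 hI1
    have hzero : ∀ x : E3, f x + (f1 x + f2 x) = 0 := by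
      intro x
      simp only [hf1, hf2, hf, kE2_zero, sub_zero]
      have hn1 : ‖(c : E3 → E3) x‖ = ‖x‖ := c.norm_map x
      have hn2 : ‖(c : E3 → E3) (c x)‖ = ‖c x‖ := c.norm_map (c x)
      rw [hn2, hn1]
      linear_combination (‖x‖ ^ (-6:ℝ)) * hker x
    have key : (∫ x in S, (f x + (f1 x + f2 x))) = 0 := by
      have heq : (fun x => f x + (f1 x + f2 x)) = fun _ => (0:ℝ) :=
        funext hzero
      rw [heq]
      simp
    have key2 : (∫ x in S, (f x + (f1 x + f2 x)))
        = (∫ x in S, f x) + ((∫ x in S, f1 x) + (∫ x in S, f2 x)) := by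
      rw [integral_add (g := fun x => f1 x + f2 x) hI (hI1.add hI2),
        integral_add hI1 hI2]
    have e1 : (∫ x in S, f1 x) = ∫ x in S, f x := h1 f
    have e2 : (∫ x in S, f2 x) = ∫ x in S, f x := by
      have := h1 f1
      rw [this, e1]
    rw [key, e1, e2] at key2
    linarith
  · exact integral_undef hI

end Stmt18Aux

/-- For `k₂` in stereographic coordinates centered at `E₂`: `a₀(E₂) = 0` and `a₁(E₂) = 0`,
i.e. the principal value `∫_{ℝ³}(k_{E₂}(x) − k_{E₂}(0))|x|^{-6} dx = 0` and
`Δ²k_{E₂}(0) + ∇(Δk_{E₂})(0)·(D²k_{E₂}(0))⁻¹ ∇(Δk_{E₂})(0) = 0`. -/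
theorem stmt18 :
    Tendsto
        (fun r : ℝ =>
          ∫ x in {x : EuclideanSpace ℝ (Fin 3) | r ≤ ‖x‖},
            (kE2 x - kE2 0) * ‖x‖ ^ (-6 : ℝ))
        (nhdsWithin 0 (Set.Ioi 0)) (nhds 0) ∧
      lapE3 (lapE3 kE2) 0 +
          (fun i : Fin 3 => fderiv ℝ (lapE3 kE2) 0 (EuclideanSpace.single i (1 : ℝ))) ⬝ᵥ
            (Matrix.of fun i j : Fin 3 =>
                iteratedFDeriv ℝ 2 kE2 0
                  ![EuclideanSpace.single i (1 : ℝ),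
                    EuclideanSpace.single j (1 : ℝ)])⁻¹.mulVec
              (fun i : Fin 3 =>
                fderiv ℝ (lapE3 kE2) 0 (EuclideanSpace.single i (1 : ℝ))) = 0 := by
  constructor
  · have heq : (fun r : ℝ =>
        ∫ x in {x : EuclideanSpace ℝ (Fin 3) | r ≤ ‖x‖},
          (kE2 x - kE2 0) * ‖x‖ ^ (-6 : ℝ)) = fun _ => (0:ℝ) :=
      funext Stmt18Aux.integral_zero_aux
    rw [heq]
    exact tendsto_const_nhds
  · have hv : (fun i : Fin 3 => fderiv ℝ (lapE3 kE2) 0 (EuclideanSpace.single i (1:ℝ)))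
        = fun _ => (0:ℝ) := funext fun i => Stmt18Aux.fderiv_lap_zero _
    rw [Stmt18Aux.bilap_zero, hv]
    simp [dotProduct]

end
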